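/- The strict order relation between computable real numbers, given via codes of their rational approximation functions, is not decidable: the halting problem reduces to deciding, given codes of computable reals α and β, whether α < β. Specifically, for each pair (e,x), the real β_{e,x} = Σ_{k∈ℕ} [∃y ≤ k, T₁(y,e,x)] · 2^{−k} is computable uniformly in (e,x), satisfies β_{e,x} > 0 iff the machine e halts on x, and β_{e,x} = 0 otherwise. -/

import Mathlib

open Nat.Partrec (Code)

/-- `c` is a code of the computable real `α`: the partial recursive function with
code `c` is total on `ℕ`, returns (encodings of) rationals, and these rationals
approximate `α` to within `1/2^n`. -/
def IsCodeOf (c : Code) (α : ℝ) : Prop :=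
  ∀ n : ℕ, ∃ q : ℚ, Encodable.encode q ∈ c.eval n ∧ |α - (q : ℝ)| < 1 / 2 ^ n

/-- `β_{e,x} = Σ_k [machine e halts on x within k steps] · 2^{-k}`. -/
noncomputable def haltingReal (e x : ℕ) : ℝ :=
  ∑' k : ℕ,
    if (Nat.Partrec.Code.evaln k (Denumerable.ofNat Code e) x).isSome then (1 : ℝ) / 2 ^ k
    else 0

namespace HaltAux

open Nat.Partrec.Code

/-- Boolean: machine `e` halts on `x` within `k` steps. -/
def hb (e x k : ℕ) : Bool := (evaln k (Denumerable.ofNat Code e) x).isSome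

/-- The real summand. -/
noncomputable def s (e x k : ℕ) : ℝ := if hb e x k then (1 : ℝ) / 2 ^ k else 0

lemma haltingReal_eq (e x : ℕ) : haltingReal e x = ∑' k, s e x k := rfl

lemma s_nonneg (e x k : ℕ) : 0 ≤ s e x k := by
  unfold s; split <;> positivity

lemma s_le (e x k : ℕ) : s e x k ≤ (1 / 2 : ℝ) ^ k := by
  unfold s; split
  · rw [div_pow, one_pow]
  · positivity

lemma summable_s (e x : ℕ) : Summable (s e x) :=
  Summable.of_nonneg_of_le (s_nonneg e x) (s_le e x) summable_geometric_two

lemma hb_mono {e x k k' : ℕ} (h : k ≤ k') (hk : hb e x k = true) : hb e x k' = true := by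
  unfold hb at *
  rw [Option.isSome_iff_exists] at *
  obtain ⟨a, ha⟩ := hk
  exact ⟨a, evaln_mono h ha⟩

lemma hb_iff_dom (e x : ℕ) :
    (∃ k, hb e x k = true) ↔ ((Denumerable.ofNat Code e).eval x).Dom := by
  unfold hb
  constructor
  · rintro ⟨k, hk⟩
    rw [Option.isSome_iff_exists] at hk
    obtain ⟨a, ha⟩ := hk
    exact Part.dom_iff_mem.2 ⟨a, evaln_sound ha⟩
  · intro h
    obtain ⟨a, ha⟩ := Part.dom_iff_mem.1 h
    obtain ⟨k, hk⟩ := evaln_complete.1 ha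
    exact ⟨k, Option.isSome_iff_exists.2 ⟨a, hk⟩⟩

lemma pos_iff (e x : ℕ) : 0 < haltingReal e x ↔ ((Denumerable.ofNat Code e).eval x).Dom := by
  rw [haltingReal_eq, ← hb_iff_dom]
  constructor
  · intro h
    by_contra hn
    push_neg at hn
    have : ∀ k, s e x k = 0 := by
      intro k
      unfold s
      simp [hn k]
    rw [tsum_congr this, tsum_zero] at h
    exact lt_irrefl 0 h
  · rintro ⟨k, hk⟩
    refine Summable.tsum_pos (summable_s e x) (s_nonneg e x) k ?_
    have hs : s e x k = 1 / 2 ^ k := by unfold s; rw [hk]; simp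
    rw [hs]
    positivity

lemma real_spec (e x : ℕ) :
    (0 < haltingReal e x ↔ ((Denumerable.ofNat Code e).eval x).Dom) ∧
    (haltingReal e x = 0 ↔ ¬ ((Denumerable.ofNat Code e).eval x).Dom) := by
  have hnn : 0 ≤ haltingReal e x := by
    rw [haltingReal_eq]
    exact tsum_nonneg (s_nonneg e x)
  refine ⟨pos_iff e x, ?_⟩
  rw [← pos_iff e x]
  constructor
  · intro h h'
    rw [h] at h'
    exact lt_irrefl 0 h'
  · intro h
    exact le_antisymm (not_lt.1 h) hnn

/-- numerator of the dyadic partial sum with denominator `2^(n+1)`. -/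
def mval (e x n : ℕ) : ℕ :=
  (List.range (n + 2)).foldr (fun k acc => (if hb e x k then 2 ^ (n + 1 - k) else 0) + acc) 0

lemma foldr_eq_sum (f : ℕ → ℕ) (m : ℕ) :
    ∀ i : ℕ, (List.range m).foldr (fun k acc => f k + acc) i = (∑ k ∈ Finset.range m, f k) + i := by
  induction m with
  | zero => intro i; simp
  | succ m ih =>
    intro i
    rw [List.range_succ, List.foldr_append, Finset.sum_range_succ]
    simp only [List.foldr]
    rw [ih (f m + i), add_assoc]

lemma mval_eq_sum (e x n : ℕ) :
    mval e x n = ∑ k ∈ Finset.range (n + 2), (if hb e x k then 2 ^ (n + 1 - k) else 0) := by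
  unfold mval
  rw [foldr_eq_sum, add_zero]

lemma hb_last_of_mval_ne (e x n : ℕ) (h : mval e x n ≠ 0) : hb e x (n + 1) = true := by
  rw [mval_eq_sum] at h
  have : ∃ k ∈ Finset.range (n + 2), (if hb e x k then 2 ^ (n + 1 - k) else 0) ≠ 0 := by
    by_contra hc
    push_neg at hc
    exact h (Finset.sum_eq_zero hc)
  obtain ⟨k, hk, hne⟩ := this
  rw [Finset.mem_range] at hk
  have hbk : hb e x k = true := by
    by_contra hbk
    simp [hbk] at hne
  exact hb_mono (by omega : k ≤ n + 1) hbk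

lemma mval_odd (e x n : ℕ) (h : mval e x n ≠ 0) : Odd (mval e x n) := by
  have hlast := hb_last_of_mval_ne e x n h
  rw [mval_eq_sum]
  have : (n + 2) = (n + 1) + 1 := rfl
  rw [this, Finset.sum_range_succ, hlast, if_pos rfl]
  simp only [Nat.sub_self, pow_zero]
  refine Even.add_one ?_
  refine Finset.even_sum _ ?_
  intro k hk
  rw [Finset.mem_range] at hk
  split
  · exact (Nat.even_pow).2 ⟨even_two, by omega⟩
  · exact Even.zero

/-- the encoding function -/
def E (m n : ℕ) : ℕ :=
  if m = 0 then Encodable.encode (0 : ℚ) else Nat.pair (2 * m) (2 ^ (n + 1))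

lemma encode_rat (q : ℚ) : Encodable.encode q = Nat.pair (Encodable.encode q.num) q.den := rfl

lemma encode_int_ofNat (m : ℕ) : Encodable.encode (m : ℤ) = 2 * m := rfl

/-- the rational approximation at stage `n`. -/
def qval (e x n : ℕ) : ℚ :=
  if h : mval e x n = 0 then 0
  else ⟨(mval e x n : ℤ), 2 ^ (n + 1), by positivity, by
    simpa using mval_odd e x n h⟩

lemma encode_qval (e x n : ℕ) : Encodable.encode (qval e x n) = E (mval e x n) n := by
  unfold qval E
  split
  · rfl
  · rfl

lemma qval_cast (e x n : ℕ) : ((qval e x n : ℚ) : ℝ) = (mval e x n : ℝ) / 2 ^ (n + 1) := by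
  unfold qval
  split
  · rename_i h
    rw [h]
    simp
  · rw [Rat.cast_def]
    norm_num

lemma qval_eq_partial (e x n : ℕ) :
    ((qval e x n : ℚ) : ℝ) = ∑ k ∈ Finset.range (n + 2), s e x k := by
  rw [qval_cast, mval_eq_sum]
  push_cast
  rw [Finset.sum_div]
  refine Finset.sum_congr rfl ?_
  intro k hk
  rw [Finset.mem_range] at hk
  unfold s
  split
  · have hkn : n + 1 - k + k = n + 1 := by omega
    rw [div_eq_div_iff (by positivity) (by positivity)]
    rw [one_mul, ← pow_add, hkn]
  · simp

lemma approx (e x n : ℕ) : |haltingReal e x - ((qval e x n : ℚ) : ℝ)| < 1 / 2 ^ n := by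
  rw [qval_eq_partial, haltingReal_eq]
  have hsum := summable_s e x
  have key := Summable.sum_add_tsum_nat_add (f := s e x) (n + 2) hsum
  have htail : (∑' k, s e x k) - ∑ k ∈ Finset.range (n + 2), s e x k
      = ∑' k, s e x (k + (n + 2)) := by
    rw [← key]; ring
  rw [htail]
  have h1 : ∀ k, s e x (k + (n + 2)) ≤ (1 / 2 : ℝ) ^ k * (1 / 2) ^ (n + 2) := by
    intro k
    calc s e x (k + (n + 2)) ≤ (1 / 2 : ℝ) ^ (k + (n + 2)) := s_le e x _
    _ = (1 / 2 : ℝ) ^ k * (1 / 2) ^ (n + 2) := by rw [pow_add]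
  have hnn : 0 ≤ ∑' k, s e x (k + (n + 2)) :=
    tsum_nonneg fun k => s_nonneg e x _
  rw [abs_of_nonneg hnn]
  have hle : (∑' k, s e x (k + (n + 2))) ≤ ∑' k : ℕ, (1 / 2 : ℝ) ^ k * (1 / 2) ^ (n + 2) := by
    refine Summable.tsum_le_tsum h1 ((summable_nat_add_iff (n + 2)).2 hsum) ?_
    exact summable_geometric_two.mul_right _
  have heq : (∑' k : ℕ, (1 / 2 : ℝ) ^ k * (1 / 2) ^ (n + 2)) = 2 * (1 / 2) ^ (n + 2) := by
    rw [tsum_mul_right, tsum_geometric_two]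
  calc (∑' k, s e x (k + (n + 2))) ≤ 2 * (1 / 2 : ℝ) ^ (n + 2) := heq ▸ hle
    _ < 1 / 2 ^ n := by
      rw [div_pow, one_pow, mul_one_div, div_lt_div_iff₀ (by positivity) (by positivity)]
      have h2n : (0:ℝ) < 2 ^ n := by positivity
      have : (2 : ℝ) ^ (n + 2) = 2 ^ n * 4 := by ring
      nlinarith

/-- the total function computed by the uniform code, on `pair (pair e x) n`. -/
def G (a : ℕ) : ℕ := E (mval a.unpair.1.unpair.1 a.unpair.1.unpair.2 a.unpair.2) a.unpair.2

lemma primrec_pow : Primrec₂ ((· ^ ·) : ℕ → ℕ → ℕ) :=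
  Primrec₂.unpaired'.1 Nat.Primrec.pow

lemma primrec_hb : Primrec (fun p : (ℕ × ℕ) × ℕ => hb p.1.1 p.1.2 p.2) := by
  unfold hb
  exact Primrec.option_isSome.comp
    (primrec_evaln.comp <|
      (Primrec.snd.pair ((Primrec.ofNat Code).comp (Primrec.fst.comp Primrec.fst))).pair
        (Primrec.snd.comp Primrec.fst))

lemma primrec_mval : Primrec (fun p : (ℕ × ℕ) × ℕ => mval p.1.1 p.1.2 p.2) := by
  unfold mval
  refine Primrec.list_foldr
    (f := fun p : (ℕ × ℕ) × ℕ => List.range (p.2 + 2))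
    (g := fun _ => (0 : ℕ))
    (h := fun p (q : ℕ × ℕ) =>
      (if hb p.1.1 p.1.2 q.1 then 2 ^ (p.2 + 1 - q.1) else 0) + q.2)
    ?_ (Primrec.const 0) ?_
  · exact Primrec.list_range.comp (Primrec.succ.comp (Primrec.succ.comp Primrec.snd))
  · show Primrec fun x : ((ℕ × ℕ) × ℕ) × ℕ × ℕ =>
      (if hb x.1.1.1 x.1.1.2 x.2.1 then 2 ^ (x.1.2 + 1 - x.2.1) else 0) + x.2.2
    refine Primrec.nat_add.comp ?_ (Primrec.snd.comp Primrec.snd)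
    refine Primrec.ite ?_ ?_ (Primrec.const 0)
    · exact Primrec.eq.comp
        (primrec_hb.comp ((Primrec.fst.comp Primrec.fst).pair (Primrec.fst.comp Primrec.snd)))
        (Primrec.const true)
    · exact primrec_pow.comp (Primrec.const 2)
        (Primrec.nat_sub.comp (Primrec.succ.comp (Primrec.snd.comp Primrec.fst))
          (Primrec.fst.comp Primrec.snd))

lemma primrec_E : Primrec (fun p : ℕ × ℕ => E p.1 p.2) := by
  unfold E
  refine Primrec.ite ?_ (Primrec.const _) ?_
  · exact Primrec.eq.comp Primrec.fst (Primrec.const 0)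
  · exact Primrec₂.natPair.comp (Primrec.nat_mul.comp (Primrec.const 2) Primrec.fst)
      (primrec_pow.comp (Primrec.const 2) (Primrec.succ.comp Primrec.snd))

set_option maxHeartbeats 1000000 in
lemma primrec_G : Primrec G := by
  have h1 : Primrec (fun a : ℕ => ((a.unpair.1.unpair.1, a.unpair.1.unpair.2), a.unpair.2)) := by
    refine Primrec.pair (Primrec.pair ?_ ?_) ?_
    · exact (Primrec.fst.comp Primrec.unpair).comp (Primrec.fst.comp Primrec.unpair)
    · exact (Primrec.snd.comp Primrec.unpair).comp (Primrec.fst.comp Primrec.unpair)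
    · exact Primrec.snd.comp Primrec.unpair
  have h2 : Primrec (fun p : (ℕ × ℕ) × ℕ => E (mval p.1.1 p.1.2 p.2) p.2) :=
    primrec_E.comp ((primrec_mval.comp Primrec.id).pair Primrec.snd)
  have h3 := h2.comp h1
  exact h3.of_eq fun a => rfl

lemma exists_F :
    ∃ F : ℕ × ℕ → Code, Computable F ∧ ∀ e x : ℕ, IsCodeOf (F (e, x)) (haltingReal e x) := by
  have hG : Nat.Partrec fun a => Part.some (G a) :=
    Nat.Partrec.of_primrec (Primrec.nat_iff.1 primrec_G)
  obtain ⟨c, hc⟩ := exists_code.1 hG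
  obtain ⟨sm, hsmc, hsm⟩ := smn
  refine ⟨fun p => sm c (Nat.pair p.1 p.2), ?_, ?_⟩
  · exact hsmc.comp (Computable.const c)
      (Primrec₂.natPair.to_comp.comp Computable.fst Computable.snd)
  · intro e x n
    refine ⟨qval e x n, ?_, approx e x n⟩
    have : (sm c (Nat.pair e x)).eval n = Part.some (G (Nat.pair (Nat.pair e x) n)) := by
      rw [hsm, hc]
    rw [this]
    have hg : G (Nat.pair (Nat.pair e x) n) = Encodable.encode (qval e x n) := by
      unfold G
      rw [Nat.unpair_pair, Nat.unpair_pair, encode_qval]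
    rw [hg]
    exact Part.mem_some _

lemma zero_code : IsCodeOf (Code.const (Encodable.encode (0 : ℚ))) 0 := by
  intro n
  refine ⟨0, ?_, ?_⟩
  · rw [eval_const]
    exact Part.mem_some _
  · have h : (0:ℝ) < 1 / 2 ^ n := by positivity
    simp only [Rat.cast_zero, sub_zero, abs_zero]
    exact h

end HaltAux

theorem strict_order_of_computable_reals_undecidable :
    (∃ F : ℕ × ℕ → Code, Computable F ∧ ∀ e x : ℕ, IsCodeOf (F (e, x)) (haltingReal e x)) ∧
      (∀ e x : ℕ,
        (0 < haltingReal e x ↔ ((Denumerable.ofNat Code e).eval x).Dom) ∧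
        (haltingReal e x = 0 ↔ ¬ ((Denumerable.ofNat Code e).eval x).Dom)) ∧
      ¬ ∃ dec : Code → Code → Bool,
        Computable₂ dec ∧
          ∀ (c₁ c₂ : Code) (α β : ℝ),
            IsCodeOf c₁ α → IsCodeOf c₂ β → (dec c₁ c₂ = true ↔ α < β) := by
  obtain ⟨F, hFc, hF⟩ := HaltAux.exists_F
  refine ⟨⟨F, hFc, hF⟩, HaltAux.real_spec, ?_⟩
  rintro ⟨dec, hdecc, hdec⟩
  set c₀ : Code := Nat.Partrec.Code.const (Encodable.encode (0 : ℚ)) with hc₀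
  have hhalt : ComputablePred fun c : Code => (c.eval 0).Dom := by
    rw [ComputablePred.computable_iff]
    refine ⟨fun c => dec c₀ (F (Encodable.encode c, 0)), ?_, ?_⟩
    · exact hdecc.comp (Computable.const c₀)
        (hFc.comp (Computable.encode.pair (Computable.const 0)))
    · funext c
      have h1 := hdec c₀ (F (Encodable.encode c, 0)) 0 (haltingReal (Encodable.encode c) 0)
        HaltAux.zero_code (hF (Encodable.encode c) 0)
      have h2 := (HaltAux.real_spec (Encodable.encode c) 0).1
      rw [Denumerable.ofNat_encode] at h2
      rw [eq_iff_iff]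
      rw [h1, h2]
  exact ComputablePred.halting_problem 0 hhalt
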